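/- arXiv:1507.04165 — 3 statements merged into one kernel-verified Lean document; each statement's English description precedes it below -/
import Mathlib

section
/- Let G be a discrete subgroup of SL(2,ℂ). Then G acts properly discontinuously on its domain of discontinuity: for every compact subset K ⊆ Ω_G, the set {g ∈ G : g•K ∩ K ≠ ∅} is finite. -/
open Matrix

noncomputable section

abbrev SL2C := Matrix.SpecialLinearGroup (Fin 2) ℂ

/-- The complex projective line. -/
abbrev P1C := Projectivization ℂ (Fin 2 → ℂ)

instance : TopologicalSpace P1C :=
  inferInstanceAs (TopologicalSpace (Quotient (projectivizationSetoid ℂ (Fin 2 → ℂ))))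

/-- The action of `SL(2,ℂ)` on the projective line induced by the linear action. -/
def smulP (g : SL2C) (x : P1C) : P1C :=
  x.map (Matrix.SpecialLinearGroup.toLin' g).toLinearMap
    (Matrix.SpecialLinearGroup.toLin' g).injective

/-- `G` is discrete if it is a discrete subset of the space of 2x2 complex matrices. -/
def IsDiscreteSG (G : Subgroup SL2C) : Prop :=
  DiscreteTopology ((fun g : SL2C => (g : Matrix (Fin 2) (Fin 2) ℂ)) '' (G : Set SL2C))

/-- The domain of discontinuity: the union of all open sets `U` such that
`{g ∈ G : g•U ∩ U ≠ ∅}` is finite. -/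
def domOfDisc (G : Subgroup SL2C) : Set P1C :=
  ⋃₀ {U : Set P1C | IsOpen U ∧ {g : SL2C | g ∈ G ∧ (smulP g '' U ∩ U).Nonempty}.Finite}

/-- The limit set: the complement of the domain of discontinuity. -/
def limitSet (G : Subgroup SL2C) : Set P1C := (domOfDisc G)ᶜ

/-! ### Auxiliary material -/

attribute [local instance] Matrix.normedAddCommGroup Matrix.normedSpace

open Projectivization Filter Function

/-- The cross product (determinant) of two vectors in `ℂ²`. -/
def crs (v w : Fin 2 → ℂ) : ℂ := v 0 * w 1 - v 1 * w 0

lemma crs_self (v : Fin 2 → ℂ) : crs v v = 0 := by simp [crs, mul_comm]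

lemma crs_smul_left (c : ℂ) (v w : Fin 2 → ℂ) : crs (c • v) w = c * crs v w := by
  simp [crs]; ring

lemma crs_smul_right (c : ℂ) (v w : Fin 2 → ℂ) : crs v (c • w) = c * crs v w := by
  simp [crs]; ring

lemma crs_mulVec (M : Matrix (Fin 2) (Fin 2) ℂ) (v w : Fin 2 → ℂ) :
    crs (M *ᵥ v) (M *ᵥ w) = M.det * crs v w := by
  simp [crs, Matrix.mulVec, dotProduct, Matrix.det_fin_two, Fin.sum_univ_two]
  ring

lemma ne_zero_iff (v : Fin 2 → ℂ) : v ≠ 0 ↔ v 0 ≠ 0 ∨ v 1 ≠ 0 := by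
  constructor
  · intro h
    by_contra hc
    push_neg at hc
    exact h (funext fun i => by fin_cases i <;> simp [hc.1, hc.2])
  · rintro (h | h) h0 <;> [exact h (by simp [h0]); exact h (by simp [h0])]

lemma exists_smul_of_crs_eq_zero {v w : Fin 2 → ℂ} (hv : v ≠ 0) (h : crs v w = 0) :
    ∃ c : ℂ, w = c • v := by
  unfold crs at h
  rcases (ne_zero_iff v).1 hv with h0 | h1
  · refine ⟨w 0 / v 0, funext fun i => ?_⟩
    fin_cases i
    · simp [div_mul_cancel₀, h0]
    · show w 1 = w 0 / v 0 * v 1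
      field_simp
      linear_combination h
  · refine ⟨w 1 / v 1, funext fun i => ?_⟩
    fin_cases i
    · show w 0 = w 1 / v 1 * v 0
      field_simp
      linear_combination -h
    · simp [div_mul_cancel₀, h1]

lemma matrix_ne_zero_iff (M : Matrix (Fin 2) (Fin 2) ℂ) : M ≠ 0 ↔ ∃ i j, M i j ≠ 0 := by
  constructor
  · intro h
    by_contra hc
    push_neg at hc
    exact h (by ext i j; simpa using hc i j)
  · rintro ⟨i, j, hij⟩ h0
    exact hij (by simp [h0])

lemma crs_eq_zero_of_kernel {M : Matrix (Fin 2) (Fin 2) ℂ} (hM : M ≠ 0) {u u' : Fin 2 → ℂ}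
    (hu : M *ᵥ u = 0) (hu' : M *ᵥ u' = 0) : crs u u' = 0 := by
  have hr : ∀ i, M i 0 * u 0 + M i 1 * u 1 = 0 := by
    intro i
    have := congrFun hu i
    simpa [Matrix.mulVec, dotProduct, Fin.sum_univ_two] using this
  have hr' : ∀ i, M i 0 * u' 0 + M i 1 * u' 1 = 0 := by
    intro i
    have := congrFun hu' i
    simpa [Matrix.mulVec, dotProduct, Fin.sum_univ_two] using this
  have key : ∀ i j, M i j * crs u u' = 0 := by
    intro i j
    fin_cases j
    · show M i 0 * crs u u' = 0
      unfold crs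
      linear_combination u' 1 * hr i - u 1 * hr' i
    · show M i 1 * crs u u' = 0
      unfold crs
      linear_combination -u' 0 * hr i + u 0 * hr' i
  obtain ⟨i, j, hij⟩ := (matrix_ne_zero_iff M).1 hM
  exact (mul_eq_zero.1 (key i j)).resolve_left hij

lemma exists_mulVec_ne_zero {M : Matrix (Fin 2) (Fin 2) ℂ} (hM : M ≠ 0) :
    ∃ w, M *ᵥ w ≠ 0 := by
  obtain ⟨i, j, hij⟩ := (matrix_ne_zero_iff M).1 hM
  refine ⟨Pi.single j 1, fun h => hij ?_⟩
  have := congrFun h i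
  simpa [Matrix.mulVec_single] using this

example : True := trivial

/-! ### Topology of the projective line -/

lemma continuous_mkP :
    Continuous fun v : { v : Fin 2 → ℂ // v ≠ 0 } => Projectivization.mk ℂ v.1 v.2 := by
  exact continuous_quotient_mk'

lemma tendsto_mkP {f : ℕ → Fin 2 → ℂ} {v : Fin 2 → ℂ} (hf : ∀ n, f n ≠ 0) (hv : v ≠ 0)
    (h : Tendsto f atTop (nhds v)) :
    Tendsto (fun n => Projectivization.mk ℂ (f n) (hf n)) atTop
      (nhds (Projectivization.mk ℂ v hv)) := by
  have h1 : Tendsto (fun n => (⟨f n, hf n⟩ : { v : Fin 2 → ℂ // v ≠ 0 })) atTop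
      (nhds ⟨v, hv⟩) := by
    rw [tendsto_subtype_rng]
    exact h
  exact (continuous_mkP.tendsto _).comp h1

/-- Scale invariant "distance" to a fixed nonzero vector's class. -/
def Dfun (w : Fin 2 → ℂ) : P1C → ℝ :=
  Projectivization.lift (fun v => ‖crs v.1 w‖ / ‖v.1‖) (by
    rintro ⟨a, ha⟩ ⟨b, hb⟩ t (rfl : a = t • b)
    have ht : t ≠ 0 := by
      rintro rfl
      simp at ha
    simp only [crs_smul_left, norm_mul, norm_smul]
    rw [mul_div_mul_left _ _ (by simpa using ht)])

lemma Dfun_mk (w : Fin 2 → ℂ) (v : Fin 2 → ℂ) (hv : v ≠ 0) :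
    Dfun w (Projectivization.mk ℂ v hv) = ‖crs v w‖ / ‖v‖ := rfl

lemma continuous_Dfun (w : Fin 2 → ℂ) : Continuous (Dfun w) := by
  unfold Dfun Projectivization.lift
  apply continuous_quot_lift
  apply Continuous.div
  · exact (Continuous.sub (((continuous_apply 0).comp continuous_subtype_val).mul continuous_const)
      (((continuous_apply 1).comp continuous_subtype_val).mul continuous_const)).norm
  · exact continuous_subtype_val.norm
  · intro v
    simpa using v.2

instance : T2Space P1C := by
  refine ⟨fun x y hxy => ?_⟩
  set w := y.rep with hw
  have hcrs : crs x.rep w ≠ 0 := by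
    intro h
    obtain ⟨c, hc⟩ := exists_smul_of_crs_eq_zero x.rep_nonzero h
    apply hxy
    have hyx : y = x := by
      rw [← x.mk_rep, ← y.mk_rep, Projectivization.mk_eq_mk_iff']
      exact ⟨c, hc.symm⟩
    exact hyx.symm
  set ε := Dfun w x with hε
  have hεpos : 0 < ε := by
    rw [hε, ← x.mk_rep, Dfun_mk]
    exact div_pos (norm_pos_iff.2 hcrs) (norm_pos_iff.2 x.rep_nonzero)
  refine ⟨Dfun w ⁻¹' Set.Ioi (ε / 2), Dfun w ⁻¹' Set.Iio (ε / 2),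
    (continuous_Dfun w).isOpen_preimage _ isOpen_Ioi,
    (continuous_Dfun w).isOpen_preimage _ isOpen_Iio, ?_, ?_, ?_⟩
  · show ε / 2 < Dfun w x
    rw [← hε]
    linarith
  · show Dfun w y < ε / 2
    have hy0 : Dfun w y = 0 := by
      rw [← y.mk_rep, Dfun_mk, ← hw, crs_self]
      simp
    rw [hy0]
    linarith
  · rw [Set.disjoint_left]
    intro z hz1 hz2
    simp only [Set.mem_preimage, Set.mem_Ioi, Set.mem_Iio] at hz1 hz2
    linarith

lemma P1C_not_isOpen_singleton (z : P1C) : ¬ IsOpen ({z} : Set P1C) := by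
  intro hop
  have hpre : IsOpen ((fun v : { v : Fin 2 → ℂ // v ≠ 0 } => Projectivization.mk ℂ v.1 v.2) ⁻¹'
      {z}) := continuous_mkP.isOpen_preimage _ hop
  obtain ⟨W, hWopen, hWeq⟩ := isOpen_induced_iff.1 hpre
  have hvW : z.rep ∈ W := by
    have : (⟨z.rep, z.rep_nonzero⟩ : { v : Fin 2 → ℂ // v ≠ 0 }) ∈ Subtype.val ⁻¹' W := by
      rw [hWeq]
      simp only [Set.mem_preimage, Set.mem_singleton_iff]
      exact z.mk_rep
    exact this
  obtain ⟨δ, hδpos, hball⟩ := Metric.isOpen_iff.1 hWopen z.rep hvW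
  set u : Fin 2 → ℂ := ![-(starRingEnd ℂ) (z.rep 1), (starRingEnd ℂ) (z.rep 0)] with hu
  have hcru : crs z.rep u ≠ 0 := by
    have heq : crs z.rep u = (Complex.normSq (z.rep 0) + Complex.normSq (z.rep 1) : ℝ) := by
      simp only [crs, hu]
      simp only [Matrix.cons_val_one, Matrix.head_cons, Matrix.cons_val_zero, neg_mul, mul_neg,
        sub_neg_eq_add]
      rw [Complex.mul_conj, Complex.mul_conj]
      push_cast
      ring
    rw [heq]
    norm_cast
    intro h
    have c0 := Complex.normSq_nonneg (z.rep 0)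
    have c1 := Complex.normSq_nonneg (z.rep 1)
    have h0 : z.rep 0 = 0 := Complex.normSq_eq_zero.1 (by linarith)
    have h1 : z.rep 1 = 0 := Complex.normSq_eq_zero.1 (by linarith)
    exact ((ne_zero_iff z.rep).1 z.rep_nonzero).elim (fun h => h h0) (fun h => h h1)
  set t : ℝ := δ / (2 * (‖u‖ + 1)) with ht
  have hupos : (0:ℝ) < ‖u‖ + 1 := by positivity
  have htpos : 0 < t := by positivity
  have hcrv' : crs z.rep (z.rep + (t : ℂ) • u) ≠ 0 := by
    have heq : crs z.rep (z.rep + (t : ℂ) • u) = (t : ℂ) * crs z.rep u := by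
      simp [crs]
      ring
    rw [heq]
    exact mul_ne_zero (by exact_mod_cast htpos.ne') hcru
  have hv'0 : z.rep + (t : ℂ) • u ≠ 0 := by
    intro h
    apply hcrv'
    rw [h]
    simp [crs]
  have hv'W : z.rep + (t : ℂ) • u ∈ W := by
    apply hball
    rw [Metric.mem_ball, dist_eq_norm]
    have heq : z.rep + (t : ℂ) • u - z.rep = (t : ℂ) • u := by abel
    rw [heq, norm_smul, Complex.norm_real, Real.norm_of_nonneg htpos.le, ht]
    rw [div_mul_eq_mul_div, div_lt_iff₀ (by positivity)]
    nlinarith [norm_nonneg u]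
  have hmk : Projectivization.mk ℂ (z.rep + (t : ℂ) • u) hv'0 = z := by
    have : (⟨z.rep + (t : ℂ) • u, hv'0⟩ : { v : Fin 2 → ℂ // v ≠ 0 }) ∈ Subtype.val ⁻¹' W :=
      hv'W
    rw [hWeq] at this
    simpa using this
  apply hcrv'
  have hmk2 : Projectivization.mk ℂ (z.rep + (t : ℂ) • u) hv'0 =
      Projectivization.mk ℂ z.rep z.rep_nonzero := hmk.trans z.mk_rep.symm
  rw [Projectivization.mk_eq_mk_iff'] at hmk2
  obtain ⟨c, hc⟩ := hmk2
  have hz : crs z.rep (c • z.rep) = 0 := by rw [crs_smul_right, crs_self, mul_zero]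
  rw [hc] at hz
  exact hz

lemma exists_ne_mem_of_isOpen {U : Set P1C} (hU : IsOpen U) {a : P1C} (ha : a ∈ U) :
    ∃ z ∈ U, z ≠ a := by
  by_contra h
  push_neg at h
  have : U = {a} := Set.eq_singleton_iff_unique_mem.2 ⟨ha, h⟩
  exact P1C_not_isOpen_singleton a (this ▸ hU)

/-! ### The action -/

lemma mulVec_SL_ne_zero (g : SL2C) {v : Fin 2 → ℂ} (hv : v ≠ 0) :
    (g : Matrix (Fin 2) (Fin 2) ℂ) *ᵥ v ≠ 0 := by
  intro h
  apply hv
  have hinj := (Matrix.SpecialLinearGroup.toLin' g).injective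
  apply hinj
  simp only [map_zero]
  rw [Matrix.SpecialLinearGroup.toLin'_apply, Matrix.toLin'_apply]
  exact h

lemma smulP_mk (g : SL2C) (v : Fin 2 → ℂ) (hv : v ≠ 0) :
    smulP g (Projectivization.mk ℂ v hv) =
      Projectivization.mk ℂ ((g : Matrix (Fin 2) (Fin 2) ℂ) *ᵥ v) (mulVec_SL_ne_zero g hv) := by
  unfold smulP
  rw [Projectivization.map_mk]
  rw [Projectivization.mk_eq_mk_iff']
  refine ⟨1, ?_⟩
  rw [one_smul]
  show (g : Matrix (Fin 2) (Fin 2) ℂ) *ᵥ v = (Matrix.SpecialLinearGroup.toLin' g).toLinearMap v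
  rw [LinearEquiv.coe_coe, Matrix.SpecialLinearGroup.toLin'_apply, Matrix.toLin'_apply]

/-! ### Discreteness -/

set_option maxHeartbeats 1000000 in
lemma no_convergent_subseq {G : Subgroup SL2C} (hdisc : IsDiscreteSG G) (g : ℕ → SL2C)
    (hg : ∀ n, g n ∈ G) (hinj : Function.Injective g) (M : Matrix (Fin 2) (Fin 2) ℂ)
    (hconv : Tendsto (fun n => (g n : Matrix (Fin 2) (Fin 2) ℂ)) atTop (nhds M)) : False := by
  have hinv : Tendsto (fun n => (((g n)⁻¹ : SL2C) : Matrix (Fin 2) (Fin 2) ℂ)) atTop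
      (nhds M.adjugate) := by
    have : ∀ n, (((g n)⁻¹ : SL2C) : Matrix (Fin 2) (Fin 2) ℂ) =
        ((g n : Matrix (Fin 2) (Fin 2) ℂ)).adjugate := fun n =>
      Matrix.SpecialLinearGroup.coe_inv (g n)
    simp only [this]
    exact ((Continuous.matrix_adjugate continuous_id).tendsto M).comp hconv
  have hdetM : M.det = 1 := by
    have h1 : Tendsto (fun n => ((g n : Matrix (Fin 2) (Fin 2) ℂ)).det) atTop (nhds M.det) :=
      ((Continuous.matrix_det continuous_id).tendsto M).comp hconv
    have h2 : (fun n => ((g n : Matrix (Fin 2) (Fin 2) ℂ)).det) = fun _ => (1 : ℂ) := by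
      funext n
      exact (g n).2
    rw [h2] at h1
    exact (tendsto_const_nhds_iff.1 h1).symm
  have hprod : Tendsto (fun n => ((g (n + 1) * (g n)⁻¹ : SL2C) : Matrix (Fin 2) (Fin 2) ℂ))
      atTop (nhds 1) := by
    have hshift : Tendsto (fun n => (g (n + 1) : Matrix (Fin 2) (Fin 2) ℂ)) atTop (nhds M) :=
      hconv.comp (tendsto_add_atTop_nat 1)
    have hmul : Tendsto (fun n => (g (n + 1) : Matrix (Fin 2) (Fin 2) ℂ) *
        (((g n)⁻¹ : SL2C) : Matrix (Fin 2) (Fin 2) ℂ)) atTop (nhds (M * M.adjugate)) :=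
      hshift.mul hinv
    rw [Matrix.mul_adjugate, hdetM, one_smul] at hmul
    simp only [Matrix.SpecialLinearGroup.coe_mul]
    exact hmul
  -- discreteness: the products must eventually equal 1
  have h1mem : (1 : Matrix (Fin 2) (Fin 2) ℂ) ∈
      ((fun g : SL2C => (g : Matrix (Fin 2) (Fin 2) ℂ)) '' (G : Set SL2C)) :=
    ⟨1, G.one_mem, rfl⟩
  haveI : DiscreteTopology ((fun g : SL2C => (g : Matrix (Fin 2) (Fin 2) ℂ)) ''
      (G : Set SL2C)) := hdisc
  have hopen : IsOpen ({⟨1, h1mem⟩} :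
      Set ((fun g : SL2C => (g : Matrix (Fin 2) (Fin 2) ℂ)) '' (G : Set SL2C))) :=
    isOpen_discrete _
  obtain ⟨V, hVopen, hVeq⟩ := isOpen_induced_iff.1 hopen
  have h1V : (1 : Matrix (Fin 2) (Fin 2) ℂ) ∈ V := by
    have : (⟨1, h1mem⟩ : ((fun g : SL2C => (g : Matrix (Fin 2) (Fin 2) ℂ)) ''
        (G : Set SL2C))) ∈ Subtype.val ⁻¹' V := by
      rw [hVeq]; rfl
    exact this
  have hev : ∀ᶠ n in atTop, ((g (n + 1) * (g n)⁻¹ : SL2C) : Matrix (Fin 2) (Fin 2) ℂ) ∈ V :=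
    hprod (hVopen.mem_nhds h1V)
  obtain ⟨n, hn⟩ := hev.exists
  have hmemD : ((g (n + 1) * (g n)⁻¹ : SL2C) : Matrix (Fin 2) (Fin 2) ℂ) ∈
      ((fun g : SL2C => (g : Matrix (Fin 2) (Fin 2) ℂ)) '' (G : Set SL2C)) :=
    ⟨_, G.mul_mem (hg (n + 1)) (G.inv_mem (hg n)), rfl⟩
  have : (⟨_, hmemD⟩ : ((fun g : SL2C => (g : Matrix (Fin 2) (Fin 2) ℂ)) ''
      (G : Set SL2C))) ∈ Subtype.val ⁻¹' V := hn
  rw [hVeq] at this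
  have heq1 : ((g (n + 1) * (g n)⁻¹ : SL2C) : Matrix (Fin 2) (Fin 2) ℂ) = 1 := by
    simpa [Subtype.ext_iff] using this
  have h2 : g (n + 1) * (g n)⁻¹ = 1 := Subtype.coe_injective heq1
  rw [mul_inv_eq_one] at h2
  exact Nat.succ_ne_self n (hinj h2)

lemma norms_tendsto {G : Subgroup SL2C} (hdisc : IsDiscreteSG G) (g : ℕ → SL2C)
    (hg : ∀ n, g n ∈ G) (hinj : Function.Injective g) :
    Tendsto (fun n => ‖(g n : Matrix (Fin 2) (Fin 2) ℂ)‖) atTop atTop := by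
  have hfin : ∀ C : ℝ, {n : ℕ | ‖(g n : Matrix (Fin 2) (Fin 2) ℂ)‖ ≤ C}.Finite := by
    intro C
    by_contra hinf
    have hinf' : Set.Infinite {n : ℕ | ‖(g n : Matrix (Fin 2) (Fin 2) ℂ)‖ ≤ C} := hinf
    set f := hinf'.natEmbedding with hf
    have hball : ∀ k, (g (f k) : Matrix (Fin 2) (Fin 2) ℂ) ∈ Metric.closedBall 0 C := by
      intro k
      rw [Metric.mem_closedBall, dist_zero_right]
      exact (f k).2
    obtain ⟨M, _, φ, hφmono, hφconv⟩ :=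
      (isCompact_closedBall (0 : Matrix (Fin 2) (Fin 2) ℂ) C).tendsto_subseq hball
    refine no_convergent_subseq hdisc (fun k => g ((f (φ k) : ℕ))) (fun k => hg _) ?_ M hφconv
    intro a b hab
    exact hφmono.injective (f.injective (Subtype.ext (hinj hab)))
  rw [tendsto_atTop]
  intro C
  rw [← Nat.cofinite_eq_atTop, eventually_cofinite]
  apply Set.Finite.subset (hfin C)
  intro n hn
  simp only [Set.mem_setOf_eq, not_le] at hn ⊢
  exact hn.le

/-! ### Points arising from degenerate limits are in the limit set -/

lemma mem_limitSet {G : Subgroup SL2C} (h : ℕ → SL2C) (hmem : ∀ n, h n ∈ G)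
    (hinj : Function.Injective h) (c : ℕ → ℂ) (hc : ∀ n, c n ≠ 0)
    (M : Matrix (Fin 2) (Fin 2) ℂ) (hM0 : M ≠ 0) (hdet : M.det = 0)
    (hconv : Tendsto (fun n => c n • (h n : Matrix (Fin 2) (Fin 2) ℂ)) atTop (nhds M))
    (w : Fin 2 → ℂ) (hw : M *ᵥ w ≠ 0) :
    Projectivization.mk ℂ (M *ᵥ w) hw ∈ limitSet G := by
  rw [limitSet, Set.mem_compl_iff]
  intro hmem'
  obtain ⟨U, ⟨hUopen, hUfin⟩, haU⟩ := hmem'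
  obtain ⟨v, hv0, hvU, hMv⟩ : ∃ v, ∃ hv : v ≠ 0, Projectivization.mk ℂ v hv ∈ U ∧ M *ᵥ v ≠ 0 := by
    by_cases hMa : M *ᵥ (M *ᵥ w) = 0
    · obtain ⟨z, hzU, hza⟩ := exists_ne_mem_of_isOpen hUopen haU
      refine ⟨z.rep, z.rep_nonzero, by rwa [z.mk_rep], ?_⟩
      intro h0
      apply hza
      have hcr : crs (M *ᵥ w) z.rep = 0 := crs_eq_zero_of_kernel hM0 hMa h0
      obtain ⟨d, hd⟩ := exists_smul_of_crs_eq_zero hw hcr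
      rw [← z.mk_rep, Projectivization.mk_eq_mk_iff']
      exact ⟨d, hd.symm⟩
    · exact ⟨M *ᵥ w, hw, haU, hMa⟩
  obtain ⟨d, hd⟩ : ∃ d : ℂ, M *ᵥ v = d • (M *ᵥ w) := by
    apply exists_smul_of_crs_eq_zero hw
    have hcr := crs_mulVec M w v
    rw [hdet, zero_mul] at hcr
    exact hcr
  have hmkeq : Projectivization.mk ℂ (M *ᵥ v) hMv = Projectivization.mk ℂ (M *ᵥ w) hw := by
    rw [Projectivization.mk_eq_mk_iff']
    exact ⟨d, hd.symm⟩
  have hvec : Tendsto (fun n => (c n • (h n : Matrix (Fin 2) (Fin 2) ℂ)) *ᵥ v) atTop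
      (nhds (M *ᵥ v)) :=
    ((Continuous.matrix_mulVec continuous_id continuous_const).tendsto M).comp hconv
  have hne : ∀ n, (c n • (h n : Matrix (Fin 2) (Fin 2) ℂ)) *ᵥ v ≠ 0 := by
    intro n
    rw [Matrix.smul_mulVec]
    exact smul_ne_zero (hc n) (mulVec_SL_ne_zero (h n) hv0)
  have horb : Tendsto (fun n => smulP (h n) (Projectivization.mk ℂ v hv0)) atTop
      (nhds (Projectivization.mk ℂ (M *ᵥ w) hw)) := by
    rw [← hmkeq]
    have heq : ∀ n, smulP (h n) (Projectivization.mk ℂ v hv0) =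
        Projectivization.mk ℂ ((c n • (h n : Matrix (Fin 2) (Fin 2) ℂ)) *ᵥ v) (hne n) := by
      intro n
      rw [smulP_mk, Projectivization.mk_eq_mk_iff']
      refine ⟨(c n)⁻¹, ?_⟩
      rw [Matrix.smul_mulVec, smul_smul, inv_mul_cancel₀ (hc n), one_smul]
    simp only [heq]
    exact tendsto_mkP hne hMv hvec
  have hev : ∀ᶠ n in atTop, smulP (h n) (Projectivization.mk ℂ v hv0) ∈ U :=
    horb (hUopen.mem_nhds haU)
  obtain ⟨N, hN⟩ := eventually_atTop.1 hev
  have hinf : {g : SL2C | g ∈ G ∧ (smulP g '' U ∩ U).Nonempty}.Infinite := by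
    refine Set.infinite_of_injective_forall_mem (f := fun k : ℕ => h (k + N)) ?_ ?_
    · intro a b hab
      have := hinj hab
      omega
    · intro k
      refine ⟨hmem _, smulP (h (k + N)) (Projectivization.mk ℂ v hv0),
        ⟨Projectivization.mk ℂ v hv0, hvU, rfl⟩, hN _ (Nat.le_add_left N k)⟩
  exact hinf hUfin

lemma adjugate_ne_zero {M : Matrix (Fin 2) (Fin 2) ℂ} (hM : M ≠ 0) : M.adjugate ≠ 0 := by
  intro h0
  apply hM
  have h := (Matrix.adjugate_fin_two M).symm.trans h0
  ext i j
  fin_cases i <;> fin_cases j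
  · have := congrFun (congrFun h 1) 1
    simpa using this
  · have := congrFun (congrFun h 0) 1
    simpa using this
  · have := congrFun (congrFun h 1) 0
    simpa using this
  · have := congrFun (congrFun h 0) 0
    simpa using this

/-! ### Main theorem -/

set_option maxHeartbeats 1000000 in
/-- A discrete subgroup of `SL(2,ℂ)` acts properly discontinuously on its domain of
discontinuity. -/
theorem properlyDiscontinuous_on_domOfDisc (G : Subgroup SL2C)
    (hdisc : IsDiscreteSG G) (K : Set P1C) (hK : IsCompact K) (hKsub : K ⊆ domOfDisc G) :
    {g : SL2C | g ∈ G ∧ (smulP g '' K ∩ K).Nonempty}.Finite := by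
  by_contra hfin
  have hS : {g : SL2C | g ∈ G ∧ (smulP g '' K ∩ K).Nonempty}.Infinite := hfin
  set e := hS.natEmbedding with he
  set g : ℕ → SL2C := fun n => (e n : SL2C) with hg
  have hgG : ∀ n, g n ∈ G := fun n => (e n).2.1
  have hgne : ∀ n, (smulP (g n) '' K ∩ K).Nonempty := fun n => (e n).2.2
  have hginj : Function.Injective g := fun a b hab => e.injective (Subtype.ext hab)
  have hxex : ∀ n, ∃ z, z ∈ K ∧ smulP (g n) z ∈ K := by
    intro n
    obtain ⟨p, ⟨z, hzK, rfl⟩, hpK⟩ := hgne n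
    exact ⟨z, hzK, hpK⟩
  choose x hxK hgxK using hxex
  -- unit representatives of the points x n
  set u : ℕ → Fin 2 → ℂ := fun n => ((‖(x n).rep‖⁻¹ : ℝ) : ℂ) • (x n).rep with hu
  have hu0 : ∀ n, u n ≠ 0 := by
    intro n
    apply smul_ne_zero _ (x n).rep_nonzero
    simp only [ne_eq, Complex.ofReal_eq_zero, inv_eq_zero, norm_eq_zero]
    exact (x n).rep_nonzero
  have hmku : ∀ n, Projectivization.mk ℂ (u n) (hu0 n) = x n := by
    intro n
    conv_rhs => rw [← (x n).mk_rep]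
    rw [Projectivization.mk_eq_mk_iff']
    exact ⟨((‖(x n).rep‖⁻¹ : ℝ) : ℂ), rfl⟩
  have hunorm : ∀ n, u n ∈ Metric.sphere (0 : Fin 2 → ℂ) 1 := by
    intro n
    rw [mem_sphere_zero_iff_norm, hu]
    rw [norm_smul, Complex.norm_real, Real.norm_eq_abs,
      abs_of_nonneg (inv_nonneg.2 (norm_nonneg _))]
    exact inv_mul_cancel₀ (norm_ne_zero_iff.2 (x n).rep_nonzero)
  -- normalized matrices
  have hnt := norms_tendsto hdisc g hgG hginj
  set c : ℕ → ℂ := fun n => ((‖(g n : Matrix (Fin 2) (Fin 2) ℂ)‖⁻¹ : ℝ) : ℂ) with hc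
  have hgm0 : ∀ n, (g n : Matrix (Fin 2) (Fin 2) ℂ) ≠ 0 := by
    intro n h0
    have hd := (g n).2
    rw [h0] at hd
    simp at hd
  have hc0 : ∀ n, c n ≠ 0 := by
    intro n
    simp only [hc, ne_eq, Complex.ofReal_eq_zero, inv_eq_zero, norm_eq_zero]
    exact hgm0 n
  set A : ℕ → Matrix (Fin 2) (Fin 2) ℂ := fun n => c n • (g n : Matrix (Fin 2) (Fin 2) ℂ)
    with hA
  have hAsph : ∀ n, A n ∈ Metric.sphere (0 : Matrix (Fin 2) (Fin 2) ℂ) 1 := by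
    intro n
    rw [mem_sphere_zero_iff_norm, hA]
    simp only
    rw [norm_smul, hc]
    simp only
    rw [Complex.norm_real, Real.norm_eq_abs, abs_of_nonneg (inv_nonneg.2 (norm_nonneg _))]
    exact inv_mul_cancel₀ (norm_ne_zero_iff.2 (hgm0 n))
  -- extract a convergent subsequence of the pairs
  obtain ⟨⟨M, w⟩, hpmem, φ, hφmono, hφconv⟩ :=
    ((isCompact_sphere (0 : Matrix (Fin 2) (Fin 2) ℂ) 1).prod
      (isCompact_sphere (0 : Fin 2 → ℂ) 1)).tendsto_subseq
      (x := fun n => (A n, u n)) (fun n => Set.mk_mem_prod (hAsph n) (hunorm n))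
  have hconvA : Tendsto (fun k => A (φ k)) atTop (nhds M) :=
    (continuous_fst.tendsto _).comp hφconv
  have hconvu : Tendsto (fun k => u (φ k)) atTop (nhds w) :=
    (continuous_snd.tendsto _).comp hφconv
  have hM0 : M ≠ 0 := by
    have hn1 : ‖M‖ = 1 := mem_sphere_zero_iff_norm.1 hpmem.1
    intro h0
    rw [h0] at hn1
    simp at hn1
  have hw0 : w ≠ 0 := by
    have hn1 : ‖w‖ = 1 := mem_sphere_zero_iff_norm.1 hpmem.2
    intro h0
    rw [h0] at hn1
    simp at hn1
  -- det M = 0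
  have hcz : Tendsto c atTop (nhds 0) := by
    have h1 : Tendsto (fun n => ‖(g n : Matrix (Fin 2) (Fin 2) ℂ)‖⁻¹) atTop (nhds 0) :=
      tendsto_inv_atTop_zero.comp hnt
    have h2 := (Complex.continuous_ofReal.tendsto 0).comp h1
    rw [Complex.ofReal_zero] at h2
    exact h2
  have hdetA : ∀ n, (A n).det = c n ^ 2 := by
    intro n
    rw [hA]
    simp only
    rw [Matrix.det_smul, (g n).2]
    simp
  have hdetM : M.det = 0 := by
    have h1 : Tendsto (fun k => (A (φ k)).det) atTop (nhds M.det) :=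
      ((Continuous.matrix_det continuous_id).tendsto M).comp hconvA
    have h2 : Tendsto (fun k => (A (φ k)).det) atTop (nhds 0) := by
      simp only [hdetA]
      have h3 := (hcz.comp hφmono.tendsto_atTop).pow 2
      simpa using h3
    exact tendsto_nhds_unique h1 h2
  have hginj' : Function.Injective fun k => g (φ k) := hginj.comp hφmono.injective
  by_cases hMw : M *ᵥ w = 0
  · -- the limit of x (φ k) is in the limit set : contradiction
    have hadj0 := adjugate_ne_zero hM0
    have hconvB : Tendsto (fun k => c (φ k) • (((g (φ k))⁻¹ : SL2C) : Matrix (Fin 2) (Fin 2) ℂ))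
        atTop (nhds M.adjugate) := by
      have heq : ∀ k, c (φ k) • (((g (φ k))⁻¹ : SL2C) : Matrix (Fin 2) (Fin 2) ℂ) =
          (A (φ k)).adjugate := by
        intro k
        rw [Matrix.SpecialLinearGroup.coe_inv, hA]
        simp only
        rw [Matrix.adjugate_smul]
        norm_num
      simp only [heq]
      exact ((Continuous.matrix_adjugate continuous_id).tendsto M).comp hconvA
    obtain ⟨w', hw'⟩ := exists_mulVec_ne_zero hadj0
    have hkerw' : M *ᵥ (M.adjugate *ᵥ w') = 0 := by
      rw [Matrix.mulVec_mulVec, Matrix.mul_adjugate, hdetM, zero_smul, Matrix.zero_mulVec]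
    have hb : Projectivization.mk ℂ (M.adjugate *ᵥ w') hw' ∈ limitSet G :=
      mem_limitSet (fun k => (g (φ k))⁻¹) (fun k => G.inv_mem (hgG _))
        (fun a b hab => hginj' (inv_injective hab)) (fun k => c (φ k)) (fun k => hc0 _)
        M.adjugate hadj0 (by rw [Matrix.det_adjugate]; rw [hdetM]; norm_num) hconvB w' hw'
    have hcr : crs (M.adjugate *ᵥ w') w = 0 := crs_eq_zero_of_kernel hM0 hkerw' hMw
    obtain ⟨d, hd⟩ := exists_smul_of_crs_eq_zero hw' hcr
    have hbu : Projectivization.mk ℂ w hw0 = Projectivization.mk ℂ (M.adjugate *ᵥ w') hw' := by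
      rw [Projectivization.mk_eq_mk_iff']
      exact ⟨d, hd.symm⟩
    have hxlim : Tendsto (fun k => x (φ k)) atTop (nhds (Projectivization.mk ℂ w hw0)) := by
      have h1 := tendsto_mkP (fun k => hu0 (φ k)) hw0 hconvu
      simpa only [hmku] using h1
    have hmemK : Projectivization.mk ℂ w hw0 ∈ K :=
      hK.isClosed.mem_of_tendsto hxlim (Filter.Eventually.of_forall fun k => hxK _)
    rw [hbu] at hmemK
    exact hb (hKsub hmemK)
  · -- the limit of smulP (g (φ k)) (x (φ k)) is in the limit set : contradiction
    have ha : Projectivization.mk ℂ (M *ᵥ w) hMw ∈ limitSet G :=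
      mem_limitSet (fun k => g (φ k)) (fun k => hgG _) hginj' (fun k => c (φ k))
        (fun k => hc0 _) M hM0 hdetM hconvA w hMw
    have hne2 : ∀ k, A (φ k) *ᵥ u (φ k) ≠ 0 := by
      intro k
      rw [hA]
      simp only
      rw [Matrix.smul_mulVec]
      exact smul_ne_zero (hc0 _) (mulVec_SL_ne_zero (g (φ k)) (hu0 _))
    have hAij : ∀ i j, Tendsto (fun k => A (φ k) i j) atTop (nhds (M i j)) := by
      intro i j
      exact (((continuous_apply j).comp (continuous_apply i)).tendsto M).comp hconvA
    have hui : ∀ i, Tendsto (fun k => u (φ k) i) atTop (nhds (w i)) :=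
      fun i => ((continuous_apply i).tendsto w).comp hconvu
    have hvec : Tendsto (fun k => A (φ k) *ᵥ u (φ k)) atTop (nhds (M *ᵥ w)) := by
      rw [tendsto_pi_nhds]
      intro i
      have hmv : ∀ (B : Matrix (Fin 2) (Fin 2) ℂ) (v : Fin 2 → ℂ),
          (B *ᵥ v) i = B i 0 * v 0 + B i 1 * v 1 := by
        intro B v
        simp [Matrix.mulVec, dotProduct, Fin.sum_univ_two]
      simp only [hmv]
      exact ((hAij i 0).mul (hui 0)).add ((hAij i 1).mul (hui 1))
    have hylim : Tendsto (fun k => smulP (g (φ k)) (x (φ k))) atTop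
        (nhds (Projectivization.mk ℂ (M *ᵥ w) hMw)) := by
      have heq : ∀ k, smulP (g (φ k)) (x (φ k)) =
          Projectivization.mk ℂ (A (φ k) *ᵥ u (φ k)) (hne2 k) := by
        intro k
        rw [← hmku (φ k), smulP_mk, Projectivization.mk_eq_mk_iff']
        refine ⟨(c (φ k))⁻¹, ?_⟩
        rw [hA]
        simp only
        rw [Matrix.smul_mulVec, smul_smul, inv_mul_cancel₀ (hc0 _), one_smul]
      simp only [heq]
      exact tendsto_mkP hne2 hMw hvec
    have hmemK : Projectivization.mk ℂ (M *ᵥ w) hMw ∈ K :=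
      hK.isClosed.mem_of_tendsto hylim (Filter.Eventually.of_forall fun k => hgxK _)
    exact ha (hKsub hmemK)
end
end

section
/- Let G be a discrete subgroup of SL(2,ℝ), viewed inside SL(2,ℂ) via the inclusion ℝ ⊆ ℂ on matrix entries (a Fuchsian group). Then the limit set Λ_G ⊆ ℙ¹(ℂ) is contained in the image of the real projective line, i.e. in the set of points of ℙ¹(ℂ) admitting a representative vector in ℝ² ⊆ ℂ². Equivalently, the complement of this circle (the union of the upper and lower half-planes inside ℙ¹(ℂ)) is contained in the domain of discontinuity Ω_G. -/
open Matrix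

noncomputable section

abbrev SL2R := Matrix.SpecialLinearGroup (Fin 2) ℝ

/-- `G` is discrete if it is a discrete subset of the space of 2x2 real matrices. -/
def IsDiscreteSGR (G : Subgroup SL2R) : Prop :=
  DiscreteTopology ((fun g : SL2R => (g : Matrix (Fin 2) (Fin 2) ℝ)) '' (G : Set SL2R))

/-- The inclusion `SL(2,ℝ) → SL(2,ℂ)` induced by `ℝ ⊆ ℂ` on matrix entries. -/
def inclRC : SL2R →* SL2C := Matrix.SpecialLinearGroup.map Complex.ofRealHom

namespace FuchsianAux

/-! ### Closedness of the image of a discrete subgroup -/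

theorem isClosed_image_of_discrete (G : Subgroup SL2R)
    (hd : DiscreteTopology ((fun g : SL2R => (g : Matrix (Fin 2) (Fin 2) ℝ)) '' (G : Set SL2R))) :
    IsClosed ((fun g : SL2R => (g : Matrix (Fin 2) (Fin 2) ℝ)) '' (G : Set SL2R)) := by
  set S : Set (Matrix (Fin 2) (Fin 2) ℝ) :=
    (fun g : SL2R => (g : Matrix (Fin 2) (Fin 2) ℝ)) '' (G : Set SL2R) with hS
  have h1S : (1 : Matrix (Fin 2) (Fin 2) ℝ) ∈ S := ⟨1, G.one_mem, by simp⟩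
  obtain ⟨V, hVnhds, hVS⟩ := nhds_inter_eq_singleton_of_mem_discrete ⟨hd⟩ h1S
  have hf : Continuous (fun p : Matrix (Fin 2) (Fin 2) ℝ × Matrix (Fin 2) (Fin 2) ℝ =>
      p.2 * p.1.adjugate) := Continuous.matrix_mul continuous_snd continuous_fst.matrix_adjugate
  refine isClosed_of_closure_subset fun M hM => ?_
  have hdetM : M.det = 1 := by
    have hcl : IsClosed {A : Matrix (Fin 2) (Fin 2) ℝ | A.det = 1} :=
      isClosed_eq continuous_id.matrix_det continuous_const
    have hsub : S ⊆ {A : Matrix (Fin 2) (Fin 2) ℝ | A.det = 1} := by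
      rintro A ⟨γ, -, rfl⟩; exact γ.prop
    exact closure_minimal hsub hcl hM
  have hfMM : (fun p : Matrix (Fin 2) (Fin 2) ℝ × Matrix (Fin 2) (Fin 2) ℝ =>
      p.2 * p.1.adjugate) (M, M) = 1 := by simp [Matrix.mul_adjugate, hdetM]
  have hpre : (fun p : Matrix (Fin 2) (Fin 2) ℝ × Matrix (Fin 2) (Fin 2) ℝ =>
      p.2 * p.1.adjugate) ⁻¹' V ∈ nhds (M, M) :=
    hf.continuousAt.preimage_mem_nhds
      (by rw [show (M, M).2 * (M, M).1.adjugate = 1 from hfMM]; exact hVnhds)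
  rw [nhds_prod_eq, Filter.mem_prod_iff] at hpre
  obtain ⟨W1, hW1, W2, hW2, hW12⟩ := hpre
  have hW : W1 ∩ W2 ∈ nhds M := Filter.inter_mem hW1 hW2
  have hsub : ∀ A ∈ S ∩ (W1 ∩ W2), ∀ B ∈ S ∩ (W1 ∩ W2), A = B := by
    rintro A ⟨⟨γ, hγ, rfl⟩, hAW⟩ B ⟨⟨γ', hγ', rfl⟩, hBW⟩
    simp only at hAW hBW ⊢
    have hmem : ((↑γ' : Matrix (Fin 2) (Fin 2) ℝ) * (↑γ : Matrix (Fin 2) (Fin 2) ℝ).adjugate) ∈ V :=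
      hW12 (Set.mk_mem_prod hAW.1 hBW.2)
    have hcoe : ((↑γ' : Matrix (Fin 2) (Fin 2) ℝ) * (↑γ : Matrix (Fin 2) (Fin 2) ℝ).adjugate)
        = ↑(γ' * γ⁻¹) := by
      rw [Matrix.SpecialLinearGroup.coe_mul, Matrix.SpecialLinearGroup.coe_inv]
    have hmemS : ((↑γ' : Matrix (Fin 2) (Fin 2) ℝ) * (↑γ : Matrix (Fin 2) (Fin 2) ℝ).adjugate)
        ∈ S := by
      rw [hcoe]; exact ⟨γ' * γ⁻¹, mul_mem hγ' (inv_mem hγ), rfl⟩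
    have : ((↑γ' : Matrix (Fin 2) (Fin 2) ℝ) * (↑γ : Matrix (Fin 2) (Fin 2) ℝ).adjugate)
        ∈ ({1} : Set _) := by
      rw [← hVS]; exact ⟨hmem, hmemS⟩
    rw [hcoe] at this
    have h1 : γ' * γ⁻¹ = 1 := Subtype.coe_injective this
    have h2 : γ' = γ := mul_inv_eq_one.mp h1
    rw [h2]
  obtain ⟨A, hA⟩ : ((W1 ∩ W2) ∩ S).Nonempty := mem_closure_iff_nhds.1 hM _ hW
  have hMA : M ∈ closure ({A} : Set (Matrix (Fin 2) (Fin 2) ℝ)) := by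
    rw [mem_closure_iff_nhds]
    intro N hN
    obtain ⟨B, hB⟩ := mem_closure_iff_nhds.1 hM (N ∩ (W1 ∩ W2)) (Filter.inter_mem hN hW)
    exact ⟨B, hB.1.1, hsub B ⟨hB.2, hB.1.2⟩ A ⟨hA.2, hA.1⟩⟩
  rw [closure_singleton, Set.mem_singleton_iff] at hMA
  rw [hMA]; exact hA.2

/-! ### The basic open sets -/

def Ucore (Pred : Set ℂ) : Set (Fin 2 → ℂ) := {u | u 1 ≠ 0 ∧ u 0 / u 1 ∈ Pred}

def Uset (Pred : Set ℂ) : Set P1C :=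
  {y | ∃ (u : Fin 2 → ℂ) (hu : u ≠ 0), y = Projectivization.mk ℂ u hu ∧ u ∈ Ucore Pred}

theorem smul_Ucore (Pred : Set ℂ) {u : Fin 2 → ℂ} (hu : u ∈ Ucore Pred) (t : ℂˣ) :
    (t : ℂ) • u ∈ Ucore Pred := by
  obtain ⟨h1, h2⟩ := hu
  have ht : (t : ℂ) ≠ 0 := t.ne_zero
  refine ⟨by simp only [Pi.smul_apply, smul_eq_mul]; exact mul_ne_zero ht h1, ?_⟩
  have : ((t : ℂ) • u) 0 / ((t : ℂ) • u) 1 = u 0 / u 1 := by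
    simp only [Pi.smul_apply, smul_eq_mul]
    rw [mul_div_mul_left _ _ ht]
  rwa [this]

theorem mem_Uset_iff (Pred : Set ℂ) (u : Fin 2 → ℂ) (hu : u ≠ 0) :
    Projectivization.mk ℂ u hu ∈ Uset Pred ↔ u ∈ Ucore Pred := by
  constructor
  · rintro ⟨u', hu', heq, hc⟩
    obtain ⟨t, rfl⟩ := (Projectivization.mk_eq_mk_iff ℂ u u' hu hu').1 heq
    exact smul_Ucore Pred hc t
  · intro h
    exact ⟨u, hu, rfl, h⟩

theorem isOpen_Uset (Pred : Set ℂ) (hPred : IsOpen Pred) : IsOpen (Uset Pred) := by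
  have hUc : IsOpen (Ucore Pred) := by
    have h : Ucore Pred = {u : Fin 2 → ℂ | u 1 ≠ 0} ∩ (fun u : Fin 2 → ℂ => u 0 / u 1) ⁻¹' Pred :=
      rfl
    rw [h]
    apply ContinuousOn.isOpen_inter_preimage ?_ ?_ hPred
    · exact ContinuousOn.div (continuous_apply 0).continuousOn (continuous_apply 1).continuousOn
        fun u hu => hu
    · exact isOpen_ne_fun (continuous_apply 1) continuous_const
  rw [show (instTopologicalSpaceP1C : TopologicalSpace P1C) =
    instTopologicalSpaceQuotient from rfl]
  change IsOpen ((Quotient.mk (projectivizationSetoid ℂ (Fin 2 → ℂ))) ⁻¹' (Uset Pred))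
  have h : (Quotient.mk (projectivizationSetoid ℂ (Fin 2 → ℂ))) ⁻¹' (Uset Pred) =
      Subtype.val ⁻¹' (Ucore Pred) := by
    ext ⟨u, hu⟩
    have h2 : (Quotient.mk (projectivizationSetoid ℂ (Fin 2 → ℂ)) ⟨u, hu⟩ : P1C)
        = Projectivization.mk ℂ u hu := rfl
    simp only [Set.mem_preimage, h2]
    exact mem_Uset_iff Pred u hu
  rw [h]
  exact hUc.preimage continuous_subtype_val

/-! ### Computation of the action -/

theorem smulP_mk (g : SL2C) (u : Fin 2 → ℂ) (hu : u ≠ 0) :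
    smulP g (Projectivization.mk ℂ u hu) =
      Projectivization.mk ℂ ((g : Matrix (Fin 2) (Fin 2) ℂ).mulVec u)
        (by
          intro h
          exact hu ((Matrix.SpecialLinearGroup.toLin' g).map_eq_zero_iff.mp
            (by simpa [Matrix.SpecialLinearGroup.toLin'_apply, Matrix.toLin'_apply] using h))) := by
  unfold smulP
  rw [Projectivization.map_mk]
  congr 1

theorem inclRC_entry (γ : SL2R) (i j : Fin 2) :
    ((inclRC γ : SL2C) : Matrix (Fin 2) (Fin 2) ℂ) i j
      = ((γ : Matrix (Fin 2) (Fin 2) ℝ) i j : ℂ) := by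
  simp [inclRC, Matrix.SpecialLinearGroup.map_apply_coe]

theorem mulVec_two (M : Matrix (Fin 2) (Fin 2) ℂ) (u : Fin 2 → ℂ) :
    M.mulVec u 0 = M 0 0 * u 0 + M 0 1 * u 1 ∧
    M.mulVec u 1 = M 1 0 * u 0 + M 1 1 * u 1 := by
  constructor <;> simp [Matrix.mulVec, dotProduct, Fin.sum_univ_two]

/-! ### Compactness -/

theorem isCompact_Kset (C : ℝ) :
    IsCompact {M : Matrix (Fin 2) (Fin 2) ℝ | ∀ i j, |M i j| ≤ C} := by
  have h : {M : Matrix (Fin 2) (Fin 2) ℝ | ∀ i j, |M i j| ≤ C} =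
      Set.univ.pi fun _ : Fin 2 => Set.univ.pi fun _ : Fin 2 => Set.Icc (-C) C := by
    ext M
    constructor
    · intro hM i _ j _
      exact Set.mem_Icc.mpr (abs_le.mp (hM i j))
    · intro hM i j
      exact abs_le.mpr (Set.mem_Icc.mp (hM i (Set.mem_univ i) j (Set.mem_univ j)))
  rw [h]
  exact isCompact_univ_pi fun i => isCompact_univ_pi fun j => isCompact_Icc

/-! ### Geometric estimates -/

theorem mem_Pred_bounds (z : ℂ) (δ : ℝ) (hzim : |z.im| = 2*δ) (w : ℂ)
    (hw : w ∈ Metric.ball z δ ∪ Metric.ball ((starRingEnd ℂ) z) δ) :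
    δ < |w.im| ∧ |w.im| < 3*δ ∧ ‖w‖ < ‖z‖ + δ := by
  rcases hw with hw | hw <;> rw [Metric.mem_ball, Complex.dist_eq] at hw
  · have h1 : |w.im - z.im| ≤ ‖w - z‖ := by
      simpa using Complex.abs_im_le_norm (w - z)
    have h2 : ‖w‖ < ‖z‖ + δ := by
      have h4 := norm_add_le (w - z) z
      rw [sub_add_cancel] at h4
      linarith
    have h5 := abs_sub_abs_le_abs_sub z.im w.im
    rw [abs_sub_comm] at h5
    refine ⟨by linarith, ?_, h2⟩
    have h6 : |w.im| - |z.im| ≤ |w.im - z.im| := abs_sub_abs_le_abs_sub _ _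
    linarith
  · have h1 : |w.im - (-z.im)| ≤ ‖w - (starRingEnd ℂ) z‖ := by
      simpa using Complex.abs_im_le_norm (w - (starRingEnd ℂ) z)
    have h2 : ‖w‖ < ‖z‖ + δ := by
      have h3 := norm_add_le (w - (starRingEnd ℂ) z) ((starRingEnd ℂ) z)
      rw [sub_add_cancel, Complex.norm_conj] at h3
      linarith
    have ha : |(-z.im)| = 2*δ := by rw [abs_neg]; exact hzim
    have h5 := abs_sub_abs_le_abs_sub (-z.im) w.im
    rw [abs_sub_comm] at h5
    refine ⟨by linarith, ?_, h2⟩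
    have h6 : |w.im| - |(-z.im)| ≤ |w.im - (-z.im)| := abs_sub_abs_le_abs_sub _ _
    linarith

theorem entry_bounds (a b c d : ℝ) (hdet : a * d - b * c = 1) (δ R : ℝ) (hδ : 0 < δ) (hR : 0 < R)
    (w w' : ℂ) (hq : (c : ℂ) * w + d ≠ 0)
    (heq : w' * ((c : ℂ) * w + d) = (a : ℂ) * w + b)
    (hw1 : δ < |w.im|) (hw2 : |w.im| < 3*δ) (hw3 : ‖w‖ < R)
    (hw'1 : δ < |w'.im|) (hw'3 : ‖w'‖ < R) :
    |a| ≤ 2*R/δ ∧ |b| ≤ 2*R + 2*R^2/δ ∧ |c| ≤ 2/δ ∧ |d| ≤ 2 + 2*R/δ := by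
  set q : ℂ := (c : ℂ) * w + d with hqdef
  have h2 : q.re = c * w.re + d := by simp [hqdef, Complex.add_re, Complex.mul_re]
  have h3 : q.im = c * w.im := by simp [hqdef, Complex.add_im, Complex.mul_im]
  have h1 : w'.re * q.im + w'.im * q.re = a * w.im := by
    have := congrArg Complex.im heq
    simpa [Complex.mul_im, Complex.add_im, Complex.mul_re, Complex.ofReal_re,
      Complex.ofReal_im] using this
  have h4 : w'.re * q.re - w'.im * q.im = a * w.re + b := by
    have := congrArg Complex.re heq
    simpa [Complex.mul_re, Complex.add_re, Complex.mul_im, Complex.ofReal_re,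
      Complex.ofReal_im] using this
  have him : w.im = w'.im * Complex.normSq q := by
    rw [Complex.normSq_apply]
    linear_combination (-q.re) * h1 + q.im * h4 + (-(a * w.im)) * h2
      + (a * w.re + b) * h3 + (-(w.im)) * hdet
  have hnormSq_pos : 0 < Complex.normSq q := Complex.normSq_pos.2 hq
  have habs : |w.im| = |w'.im| * Complex.normSq q := by
    rw [him, abs_mul, abs_of_pos hnormSq_pos]
  have hns3 : Complex.normSq q < 3 := by
    have h5 : Complex.normSq q * δ < Complex.normSq q * |w'.im| :=
      mul_lt_mul_of_pos_left hw'1 hnormSq_pos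
    nlinarith
  have habsq : ‖q‖ ≤ 2 := by
    have h6 := Complex.sq_norm q
    nlinarith [norm_nonneg q]
  have habsim : |c| * |w.im| ≤ ‖q‖ := by
    have := Complex.abs_im_le_norm q
    rwa [h3, abs_mul] at this
  have hc : |c| ≤ 2 / δ := by
    rw [le_div_iff₀ hδ]
    nlinarith [abs_nonneg c]
  have habsw : 0 ≤ ‖w‖ := norm_nonneg w
  have hd : |d| ≤ 2 + 2*R/δ := by
    have h7 : ‖(d : ℂ)‖ = ‖q - (c:ℂ)*w‖ := by rw [hqdef]; ring_nf
    have h8 : ‖q - (c:ℂ)*w‖ ≤ ‖q‖ + ‖(c:ℂ)*w‖ :=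
      norm_sub_le q ((c:ℂ)*w)
    rw [Complex.norm_real, Real.norm_eq_abs] at h7
    rw [norm_mul, Complex.norm_real, Real.norm_eq_abs] at h8
    have h9 : |c| * ‖w‖ ≤ (2/δ) * R := by
      apply mul_le_mul hc (le_of_lt hw3) habsw
      positivity
    have h10 : 2/δ * R = 2*R/δ := by ring
    linarith [h7 ▸ h8, h10 ▸ h9]
  have hnum : ‖(a:ℂ)*w + b‖ ≤ 2*R := by
    rw [← heq, norm_mul]
    have := norm_nonneg q
    nlinarith
  have ha : |a| ≤ 2*R/δ := by
    have h10 : |a| * |w.im| ≤ ‖(a:ℂ)*w + b‖ := by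
      have h16 := Complex.abs_im_le_norm ((a:ℂ)*w + b)
      have h11 : ((a:ℂ)*w + b).im = a * w.im := by
        simp [Complex.add_im, Complex.mul_im]
      rwa [h11, abs_mul] at h16
    rw [le_div_iff₀ hδ]
    nlinarith [abs_nonneg a]
  have hb : |b| ≤ 2*R + 2*R^2/δ := by
    have h12 : ‖(b : ℂ)‖ = ‖((a:ℂ)*w + b) - (a:ℂ)*w‖ := by ring_nf
    have h13 : ‖((a:ℂ)*w + b) - (a:ℂ)*w‖ ≤
        ‖(a:ℂ)*w + b‖ + ‖(a:ℂ)*w‖ :=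
      norm_sub_le _ _
    rw [Complex.norm_real, Real.norm_eq_abs] at h12
    rw [norm_mul, Complex.norm_real, Real.norm_eq_abs] at h13
    have h14 : |a| * ‖w‖ ≤ (2*R/δ) * R := by
      apply mul_le_mul ha (le_of_lt hw3) habsw
      positivity
    have h15 : 2*R/δ * R = 2*R^2/δ := by ring
    linarith [h12 ▸ h13, h15 ▸ h14]
  exact ⟨ha, hb, hc, hd⟩

/-! ### The main discontinuity lemma -/

theorem mem_domOfDisc (G : Subgroup SL2R) (hdisc : IsDiscreteSGR G)
    (v : Fin 2 → ℂ) (hv : v ≠ 0) (h1 : v 1 ≠ 0) (him : (v 0 / v 1).im ≠ 0) :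
    Projectivization.mk ℂ v hv ∈ domOfDisc (G.map inclRC) := by
  set z : ℂ := v 0 / v 1 with hz
  set δ : ℝ := |z.im| / 2 with hδdef
  have hδ : 0 < δ := by
    rw [hδdef]
    have : 0 < |z.im| := abs_pos.2 him
    linarith
  have hzim : |z.im| = 2 * δ := by rw [hδdef]; ring
  set R : ℝ := ‖z‖ + δ with hRdef
  have hR : 0 < R := by
    have := norm_nonneg z
    rw [hRdef]; linarith
  set C : ℝ := 2 + 2/δ + 2*R/δ + 2*R^2/δ + 2*R with hCdef
  set Pred : Set ℂ := Metric.ball z δ ∪ Metric.ball ((starRingEnd ℂ) z) δ with hPreddef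
  have hPredOpen : IsOpen Pred := (Metric.isOpen_ball).union Metric.isOpen_ball
  refine Set.mem_sUnion.2 ⟨Uset Pred, ⟨isOpen_Uset Pred hPredOpen, ?_⟩, ?_⟩
  · -- finiteness
    set S : Set (Matrix (Fin 2) (Fin 2) ℝ) :=
      (fun g : SL2R => (g : Matrix (Fin 2) (Fin 2) ℝ)) '' (G : Set SL2R) with hSdef
    have hSclosed : IsClosed S := isClosed_image_of_discrete G hdisc
    set K : Set (Matrix (Fin 2) (Fin 2) ℝ) := {M | ∀ i j, |M i j| ≤ C} with hKdef
    have hKcomp : IsCompact K := isCompact_Kset C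
    have hdisc' : DiscreteTopology ↥(S ∩ K) :=
      DiscreteTopology.of_subset hdisc Set.inter_subset_left
    have hfin1 : (S ∩ K).Finite := (hKcomp.inter_left hSclosed).finite ⟨hdisc'⟩
    have hfin2 : {γ : SL2R | (γ : Matrix (Fin 2) (Fin 2) ℝ) ∈ S ∩ K}.Finite := by
      have : {γ : SL2R | (γ : Matrix (Fin 2) (Fin 2) ℝ) ∈ S ∩ K} =
          (fun γ : SL2R => (γ : Matrix (Fin 2) (Fin 2) ℝ)) ⁻¹' (S ∩ K) := rfl
      rw [this]
      exact hfin1.preimage (Set.injOn_of_injective Subtype.coe_injective)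
    refine ((hfin2.image inclRC).subset ?_)
    rintro g ⟨hgG, hne⟩
    obtain ⟨γ, hγG, rfl⟩ := Subgroup.mem_map.1 hgG
    refine ⟨γ, ⟨Set.mem_image_of_mem _ hγG, ?_⟩, rfl⟩
    -- extract the dynamics
    obtain ⟨y, ⟨x', hx'U, rfl⟩, hyU⟩ := hne
    obtain ⟨u, hu, rfl, huc⟩ := hx'U
    rw [smulP_mk] at hyU
    rw [mem_Uset_iff] at hyU
    set M : Matrix (Fin 2) (Fin 2) ℂ := ((inclRC γ : SL2C) : Matrix (Fin 2) (Fin 2) ℂ) with hMdef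
    set a : ℝ := (γ : Matrix (Fin 2) (Fin 2) ℝ) 0 0 with hadef
    set b : ℝ := (γ : Matrix (Fin 2) (Fin 2) ℝ) 0 1 with hbdef
    set c : ℝ := (γ : Matrix (Fin 2) (Fin 2) ℝ) 1 0 with hcdef
    set d : ℝ := (γ : Matrix (Fin 2) (Fin 2) ℝ) 1 1 with hddef
    have hdet : a * d - b * c = 1 := by
      have := γ.prop
      rwa [Matrix.det_fin_two] at this
    obtain ⟨hu1, hwP⟩ := huc
    obtain ⟨hmv1, hw'P⟩ := hyU
    set w : ℂ := u 0 / u 1 with hwdef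
    set w' : ℂ := M.mulVec u 0 / M.mulVec u 1 with hw'def
    have hmv0eq : M.mulVec u 0 = (a:ℂ) * u 0 + (b:ℂ) * u 1 := by
      rw [(mulVec_two M u).1, hMdef, inclRC_entry, inclRC_entry]
    have hmv1eq : M.mulVec u 1 = (c:ℂ) * u 0 + (d:ℂ) * u 1 := by
      rw [(mulVec_two M u).2, hMdef, inclRC_entry, inclRC_entry]
    have hqeq : (c:ℂ) * w + (d:ℂ) = M.mulVec u 1 / u 1 := by
      rw [hmv1eq, hwdef]
      field_simp
    have hq : (c:ℂ) * w + (d:ℂ) ≠ 0 := by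
      rw [hqeq]
      exact div_ne_zero hmv1 hu1
    have heq : w' * ((c:ℂ) * w + (d:ℂ)) = (a:ℂ) * w + (b:ℂ) := by
      rw [hqeq, hw'def, hwdef, hmv0eq]
      field_simp
    obtain ⟨hA1, hA2, hA3⟩ := mem_Pred_bounds z δ hzim w hwP
    obtain ⟨hB1, hB2, hB3⟩ := mem_Pred_bounds z δ hzim w' hw'P
    obtain ⟨ha, hb, hc, hd⟩ := entry_bounds a b c d hdet δ R hδ hR w w' hq heq
      hA1 hA2 hA3 hB1 hB3
    -- the bound C dominates
    have hCa : 2*R/δ ≤ C := by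
      have t1 : 0 ≤ 2/δ := by positivity
      have t2 : 0 ≤ 2*R^2/δ := by positivity
      rw [hCdef]; linarith
    have hCb : 2*R + 2*R^2/δ ≤ C := by
      have t1 : 0 ≤ 2/δ := by positivity
      have t2 : 0 ≤ 2*R/δ := by positivity
      rw [hCdef]; linarith
    have hCc : 2/δ ≤ C := by
      have t1 : 0 ≤ 2*R/δ := by positivity
      have t2 : 0 ≤ 2*R^2/δ := by positivity
      have t3 : 0 ≤ 2*R := by positivity
      rw [hCdef]; linarith
    have hCd : 2 + 2*R/δ ≤ C := by
      have t1 : 0 ≤ 2/δ := by positivity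
      have t2 : 0 ≤ 2*R^2/δ := by positivity
      have t3 : 0 ≤ 2*R := by positivity
      rw [hCdef]; linarith
    intro i j
    fin_cases i <;> fin_cases j
    · exact le_trans ha hCa
    · exact le_trans hb hCb
    · exact le_trans hc hCc
    · exact le_trans hd hCd
  · -- membership
    exact ⟨v, hv, rfl, ⟨h1, Or.inl (Metric.mem_ball_self hδ)⟩⟩

end FuchsianAux

/-- The limit set of a Fuchsian group is contained in the image of the real projective
line: every point of the limit set admits a representative vector in `ℝ² ⊆ ℂ²`. -/
theorem limitSet_of_fuchsian_subset_realCircle (G : Subgroup SL2R)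
    (hdisc : IsDiscreteSGR G) :
    ∀ x ∈ limitSet (G.map inclRC),
      ∃ (v : Fin 2 → ℝ) (hv : (fun i => (v i : ℂ)) ≠ 0),
        x = Projectivization.mk ℂ (fun i => (v i : ℂ)) hv := by
  intro x hx
  obtain ⟨v, hv, rfl⟩ : ∃ (v : Fin 2 → ℂ) (hv : v ≠ 0), x = Projectivization.mk ℂ v hv :=
    ⟨x.rep, x.rep_nonzero, (Projectivization.mk_rep x).symm⟩
  by_cases h1 : v 1 = 0
  · -- point at infinity
    have h0 : v 0 ≠ 0 := by
      intro h0
      apply hv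
      funext i
      fin_cases i
      · exact h0
      · exact h1
    have hne : (fun i => ((![1, 0] : Fin 2 → ℝ) i : ℂ)) ≠ 0 := by
      intro h
      have := congrFun h 0
      simp at this
    refine ⟨![1, 0], hne, ?_⟩
    rw [Projectivization.mk_eq_mk_iff']
    refine ⟨v 0, ?_⟩
    funext i
    fin_cases i <;> simp [h1]
  by_cases h2 : (v 0 / v 1).im = 0
  · -- real finite point
    set z : ℂ := v 0 / v 1 with hz
    have hzr : (z.re : ℂ) = z := by
      apply Complex.ext <;> simp [h2]
    have hne : (fun i => ((![z.re, 1] : Fin 2 → ℝ) i : ℂ)) ≠ 0 := by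
      intro h
      have := congrFun h 1
      simp at this
    refine ⟨![z.re, 1], hne, ?_⟩
    rw [Projectivization.mk_eq_mk_iff']
    refine ⟨v 1, ?_⟩
    funext i
    fin_cases i
    · simp only [Pi.smul_apply, smul_eq_mul]
      show v 1 * ((![z.re, 1] : Fin 2 → ℝ) 0 : ℂ) = v 0
      rw [show ((![z.re, 1] : Fin 2 → ℝ) 0 : ℂ) = (z.re : ℂ) by norm_num, hzr, hz]
      field_simp
    · simp only [Pi.smul_apply, smul_eq_mul]
      show v 1 * ((![z.re, 1] : Fin 2 → ℝ) 1 : ℂ) = v 1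
      norm_num
  · exfalso
    exact hx (FuchsianAux.mem_domOfDisc G hdisc v hv h1 h2)
end
end

section
/- Let G be a discrete subgroup of SL(2,ℝ). Then G acts properly discontinuously on the hyperbolic upper half-plane ℍ: for every compact subset K ⊆ ℍ, the set {g ∈ G : g•K ∩ K ≠ ∅} is finite. -/
open Matrix UpperHalfPlane

noncomputable section

lemma SL2R_smul_coe (g : SL2R) (z : ℍ) :
    ((g • z : ℍ) : ℂ) = ((g 0 0 : ℂ) * z + (g 0 1 : ℂ)) / ((g 1 0 : ℂ) * z + (g 1 1 : ℂ)) := by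
  rw [UpperHalfPlane.specialLinearGroup_apply]
  simp

lemma SL2R_denom_ne_zero (g : SL2R) (z : ℍ) :
    ((g 1 0 : ℂ) * z + (g 1 1 : ℂ)) ≠ 0 := by
  intro h
  have him : (g 1 0 : ℝ) * z.im = 0 := by
    have := congrArg Complex.im h
    simpa [UpperHalfPlane.coe_im] using this
  have hc : (g 1 0 : ℝ) = 0 := by
    rcases mul_eq_zero.1 him with h' | h'
    · exact h'
    · exact absurd h' (ne_of_gt z.im_pos)
  have hd : (g 1 1 : ℝ) = 0 := by
    have := congrArg Complex.re h
    simpa [hc, UpperHalfPlane.coe_re] using this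
  have hdet : ((g : Matrix (Fin 2) (Fin 2) ℝ)).det = 1 := g.prop
  rw [Matrix.det_fin_two, hc, hd] at hdet
  simp at hdet

lemma SL2R_im_smul (g : SL2R) (z : ℍ) :
    (g • z : ℍ).im = z.im / Complex.normSq ((g 1 0 : ℂ) * z + (g 1 1 : ℂ)) := by
  have h := SL2R_smul_coe g z
  have hdet : ((g : Matrix (Fin 2) (Fin 2) ℝ)).det = 1 := g.prop
  rw [Matrix.det_fin_two] at hdet
  have : (g • z : ℍ).im = (((g 0 0 : ℂ) * z + (g 0 1 : ℂ)) /
      ((g 1 0 : ℂ) * z + (g 1 1 : ℂ))).im := by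
    rw [← UpperHalfPlane.coe_im, h]
  have hnq : Complex.normSq ((g 1 0 : ℂ) * z + (g 1 1 : ℂ)) ≠ 0 :=
    ne_of_gt (Complex.normSq_pos.2 (SL2R_denom_ne_zero g z))
  rw [this, Complex.div_im]
  simp only [Complex.add_im, Complex.add_re, Complex.mul_im, Complex.mul_re, Complex.ofReal_re,
    Complex.ofReal_im, UpperHalfPlane.coe_im, UpperHalfPlane.coe_re]
  rw [div_sub_div_same, div_eq_div_iff hnq hnq]
  linear_combination (z.im * Complex.normSq ((g 1 0 : ℂ) * z + (g 1 1 : ℂ))) * hdet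

set_option maxHeartbeats 2000000 in
lemma SL2R_entry_bound (g : SL2R) (ρ : ℝ) (hρ : 0 ≤ ρ)
    (h : dist (g • UpperHalfPlane.I) UpperHalfPlane.I ≤ ρ) (i j : Fin 2) :
    |(g : Matrix (Fin 2) (Fin 2) ℝ) i j| ≤ Real.exp (3 * ρ) + 1 := by
  set z : ℍ := g • UpperHalfPlane.I with hz
  set a : ℝ := g 0 0
  set b : ℝ := g 0 1
  set c : ℝ := g 1 0
  set d : ℝ := g 1 1
  have hIc : ((UpperHalfPlane.I : ℍ) : ℂ) = Complex.I := rfl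
  have hden : ((c : ℂ) * Complex.I + (d : ℂ)) ≠ 0 := by
    have := SL2R_denom_ne_zero g UpperHalfPlane.I
    rwa [hIc] at this
  have hnq : Complex.normSq ((c : ℂ) * Complex.I + (d : ℂ)) = c ^ 2 + d ^ 2 := by
    simp [Complex.normSq_apply]
    ring
  have him : z.im = 1 / (c ^ 2 + d ^ 2) := by
    rw [hz, SL2R_im_smul g UpperHalfPlane.I, hIc, hnq, UpperHalfPlane.I_im]
  have hexp : Real.exp (dist z UpperHalfPlane.I) ≤ Real.exp ρ := Real.exp_le_exp.2 h
  have hexp_pos := Real.exp_pos ρ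
  have hexp1 : (1:ℝ) ≤ Real.exp ρ := Real.one_le_exp hρ
  -- lower bound on z.im
  have him_lb : Real.exp (-ρ) ≤ z.im := by
    have h1 := UpperHalfPlane.im_le_im_mul_exp_dist UpperHalfPlane.I z
    rw [UpperHalfPlane.I_im, dist_comm] at h1
    rw [Real.exp_neg, inv_le_iff_one_le_mul₀ hexp_pos]
    nlinarith [z.im_pos, Real.exp_pos (dist z UpperHalfPlane.I)]
  -- upper bound on z.im
  have him_ub : z.im ≤ Real.exp ρ := by
    have h1 := UpperHalfPlane.im_le_im_mul_exp_dist z UpperHalfPlane.I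
    rw [UpperHalfPlane.I_im, one_mul] at h1
    exact h1.trans hexp
  -- bounds on c^2 + d^2
  have him_pos : 0 < z.im := z.im_pos
  have hnq_pos : 0 < c ^ 2 + d ^ 2 := hnq ▸ Complex.normSq_pos.2 hden
  have hnq_ub : c ^ 2 + d ^ 2 ≤ Real.exp ρ := by
    rw [him] at him_lb
    have hinv : (1 / (c ^ 2 + d ^ 2)) * (c ^ 2 + d ^ 2) = 1 := by
      field_simp
    have hprod : Real.exp (-ρ) * Real.exp ρ = 1 := by
      rw [← Real.exp_add]; simp
    nlinarith [him_lb, hnq_pos, hinv, hprod, hexp_pos, Real.exp_pos (-ρ)]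
  -- bound on |z|
  have habs : ‖(z : ℂ)‖ ≤ Real.exp ρ := by
    have h1 := UpperHalfPlane.dist_coe_le z UpperHalfPlane.I
    rw [UpperHalfPlane.I_im, one_mul] at h1
    have h2 : dist ((z : ℍ) : ℂ) Complex.I ≤ Real.exp ρ - 1 := by
      rw [← hIc]
      calc dist ((z : ℍ) : ℂ) ((UpperHalfPlane.I : ℍ) : ℂ) ≤ Real.exp (dist z UpperHalfPlane.I) - 1 := h1
        _ ≤ Real.exp ρ - 1 := by linarith
    calc ‖(z : ℂ)‖ = ‖((z : ℂ) - Complex.I) + Complex.I‖ := by ring_nf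
      _ ≤ ‖(z : ℂ) - Complex.I‖ + ‖Complex.I‖ := norm_add_le _ _
      _ ≤ (Real.exp ρ - 1) + 1 := by
          rw [Complex.norm_I]
          have : ‖(z : ℂ) - Complex.I‖ = dist ((z : ℍ) : ℂ) Complex.I := by
            rw [Complex.dist_eq]
          linarith [this ▸ h2]
      _ = Real.exp ρ := by ring
  -- numerator bound
  have hnum : ((z : ℍ) : ℂ) * ((c : ℂ) * Complex.I + (d : ℂ)) = (a : ℂ) * Complex.I + (b : ℂ) := by
    have := SL2R_smul_coe g UpperHalfPlane.I
    rw [hIc] at this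
    rw [← hz] at this
    rw [this, div_mul_cancel₀ _ hden]
  have hab : a ^ 2 + b ^ 2 ≤ Real.exp (3 * ρ) := by
    have h1 : Complex.normSq ((a : ℂ) * Complex.I + (b : ℂ)) = a ^ 2 + b ^ 2 := by
      simp [Complex.normSq_apply]; ring
    have h2 : Complex.normSq ((z : ℍ) : ℂ) * (c ^ 2 + d ^ 2) = a ^ 2 + b ^ 2 := by
      rw [← h1, ← hnum, Complex.normSq_mul, hnq]
    have h3 : Complex.normSq ((z : ℍ) : ℂ) ≤ Real.exp ρ * Real.exp ρ := by
      rw [Complex.normSq_eq_norm_sq]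
      nlinarith [norm_nonneg ((z : ℍ) : ℂ)]
    have hexp3 : Real.exp ρ * Real.exp ρ * Real.exp ρ = Real.exp (3 * ρ) := by
      rw [← Real.exp_add, ← Real.exp_add]; ring_nf
    nlinarith [Complex.normSq_nonneg ((z : ℍ) : ℂ)]
  have hcd : c ^ 2 + d ^ 2 ≤ Real.exp (3 * ρ) := by
    calc c ^ 2 + d ^ 2 ≤ Real.exp ρ := hnq_ub
      _ ≤ Real.exp (3 * ρ) := Real.exp_le_exp.2 (by linarith)
  have hR1 : (1:ℝ) ≤ Real.exp (3 * ρ) := Real.one_le_exp (by linarith)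
  have key : ∀ x : ℝ, x ^ 2 ≤ Real.exp (3 * ρ) → |x| ≤ Real.exp (3 * ρ) + 1 := by
    intro x hx
    rw [abs_le]
    constructor <;> nlinarith
  fin_cases i <;> fin_cases j
  · exact key a (by nlinarith)
  · exact key b (by nlinarith)
  · exact key c (by nlinarith)
  · exact key d (by nlinarith)

abbrev M2 := Fin 2 → Fin 2 → ℝ

def mulAdjM (p : Matrix (Fin 2) (Fin 2) ℝ × Matrix (Fin 2) (Fin 2) ℝ) : Matrix (Fin 2) (Fin 2) ℝ :=
  p.1 * p.2.adjugate

def mulAdj (p : M2 × M2) : M2 := mulAdjM p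

lemma cont_mulAdj : Continuous mulAdj := by
  exact continuous_fst.matrix_mul continuous_snd.matrix_adjugate

def oneM : M2 := (1 : Matrix (Fin 2) (Fin 2) ℝ)

lemma closed_aux (G : Subgroup SL2R)
    (hdisc : DiscreteTopology
      (((fun g : SL2R => (g : Matrix (Fin 2) (Fin 2) ℝ)) '' (G : Set SL2R)) : Set M2)) :
    IsClosed (((fun g : SL2R => (g : Matrix (Fin 2) (Fin 2) ℝ)) '' (G : Set SL2R)) : Set M2) := by
  set D : Set M2 := ((fun g : SL2R => (g : Matrix (Fin 2) (Fin 2) ℝ)) '' (G : Set SL2R)) with hD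
  have h1D : oneM ∈ D := ⟨1, G.one_mem, by simp [oneM]; rfl⟩
  -- isolation of 1
  obtain ⟨ε, hε, hball⟩ : ∃ ε > 0, ∀ y ∈ D, dist y oneM < ε → y = oneM := by
    have hopen : IsOpen ({⟨oneM, h1D⟩} : Set D) := isOpen_discrete _
    rw [isOpen_induced_iff] at hopen
    obtain ⟨t, ht, hts⟩ := hopen
    have h1t : oneM ∈ t := by
      have h' : (⟨oneM, h1D⟩ : D) ∈ (Subtype.val ⁻¹' t : Set D) := by rw [hts]; rfl
      exact h'
    obtain ⟨ε, hε, hball⟩ := Metric.isOpen_iff.1 ht _ h1t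
    refine ⟨ε, hε, fun y hy hdy => ?_⟩
    have h' : (⟨y, hy⟩ : D) ∈ (Subtype.val ⁻¹' t : Set D) := hball (by rwa [Metric.mem_ball])
    rw [hts] at h'
    exact congrArg Subtype.val (Set.mem_singleton_iff.1 h')
  rw [← closure_subset_iff_isClosed]
  intro x hx
  have hdetx : Matrix.det (x : Matrix (Fin 2) (Fin 2) ℝ) = 1 := by
    have hcl : IsClosed {A : M2 | Matrix.det (A : Matrix (Fin 2) (Fin 2) ℝ) = 1} := by
      apply isClosed_eq _ continuous_const
      exact (continuous_id.matrix_det : Continuous fun A : M2 => Matrix.det (A : Matrix (Fin 2) (Fin 2) ℝ))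
    have hsub : D ⊆ {A : M2 | Matrix.det (A : Matrix (Fin 2) (Fin 2) ℝ) = 1} := by
      rintro _ ⟨g, hg, rfl⟩; exact g.prop
    exact (closure_minimal hsub hcl) hx
  have hfx : mulAdj (x, x) = oneM := by
    simp only [mulAdj, mulAdjM, oneM]
    have := Matrix.mul_adjugate (x : Matrix (Fin 2) (Fin 2) ℝ)
    rw [hdetx, one_smul] at this
    exact this
  obtain ⟨δ, hδ, hδε⟩ := Metric.continuousAt_iff.1 (cont_mulAdj.continuousAt (x := (x, x))) ε hε
  have huniq : ∀ y ∈ D, ∀ z ∈ D, dist y x < δ → dist z x < δ → y = z := by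
    rintro _ ⟨g, hg, rfl⟩ _ ⟨h, hh, rfl⟩ hgy hgz
    have hpd : dist ((((g : Matrix (Fin 2) (Fin 2) ℝ)), ((h : Matrix (Fin 2) (Fin 2) ℝ))) : M2 × M2)
        ((x, x) : M2 × M2) < δ := by
      rw [Prod.dist_eq]
      exact max_lt hgy hgz
    have hlt := hδε hpd
    rw [hfx] at hlt
    have hcoe : mulAdj ((g : Matrix (Fin 2) (Fin 2) ℝ), (h : Matrix (Fin 2) (Fin 2) ℝ)) =
        ((g * h⁻¹ : SL2R) : Matrix (Fin 2) (Fin 2) ℝ) := by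
      simp only [mulAdj, mulAdjM]
      rw [← Matrix.SpecialLinearGroup.coe_inv]
      simp
      rfl
    have hmem : mulAdj ((g : Matrix (Fin 2) (Fin 2) ℝ), (h : Matrix (Fin 2) (Fin 2) ℝ)) ∈ D := by
      rw [hcoe]
      exact ⟨g * h⁻¹, G.mul_mem hg (G.inv_mem hh), rfl⟩
    have h1 : mulAdj ((g : Matrix (Fin 2) (Fin 2) ℝ), (h : Matrix (Fin 2) (Fin 2) ℝ)) = oneM :=
      hball _ hmem hlt
    have h2 : ((g * h⁻¹ : SL2R) : Matrix (Fin 2) (Fin 2) ℝ) = ((1 : SL2R) : Matrix (Fin 2) (Fin 2) ℝ) := by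
      rw [← hcoe, h1]
      simp [oneM]
    have hgh : g * h⁻¹ = 1 := Subtype.coe_injective h2
    have : g = h := by
      rw [mul_inv_eq_one] at hgh; exact hgh
    rw [this]
  obtain ⟨y₀, hy₀D, hy₀⟩ := Metric.mem_closure_iff.1 hx δ hδ
  have hxy : x = y₀ := by
    by_contra hne
    have hr : 0 < dist x y₀ := dist_pos.2 hne
    obtain ⟨y, hyD, hy⟩ := Metric.mem_closure_iff.1 hx (min (dist x y₀) δ) (lt_min hr hδ)
    have heq : y = y₀ := huniq y hyD y₀ hy₀D
      (by rw [dist_comm]; exact hy.trans_le (min_le_right _ _)) (by rw [dist_comm]; exact hy₀)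
    rw [heq] at hy
    exact absurd (hy.trans_le (min_le_left _ _)) (lt_irrefl _)
  rw [hxy]; exact hy₀D

/-- A discrete subgroup of `SL(2,ℝ)` acts properly discontinuously on the hyperbolic
upper half-plane. -/
theorem properlyDiscontinuous_on_upperHalfPlane (G : Subgroup SL2R)
    (hdisc : IsDiscreteSGR G) (K : Set ℍ) (hK : IsCompact K) :
    {g : SL2R | g ∈ G ∧ ((fun z : ℍ => g • z) '' K ∩ K).Nonempty}.Finite := by
  obtain ⟨r, hr⟩ := hK.isBounded.subset_closedBall UpperHalfPlane.I
  set ρ : ℝ := 2 * max r 0 with hρdef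
  have hρ : 0 ≤ ρ := by positivity
  set R : ℝ := Real.exp (3 * ρ) + 1 with hRdef
  set D : Set M2 := ((fun g : SL2R => (g : Matrix (Fin 2) (Fin 2) ℝ)) '' (G : Set SL2R)) with hDdef
  have hDclosed : IsClosed D := closed_aux G hdisc
  have hDdisc : DiscreteTopology D := hdisc
  set B : Set M2 := Set.univ.pi (fun _ : Fin 2 => Set.univ.pi fun _ : Fin 2 => Set.Icc (-R) R)
    with hBdef
  have hBcomp : IsCompact B := isCompact_univ_pi fun _ => isCompact_univ_pi fun _ => isCompact_Icc
  have hFin : (B ∩ D).Finite :=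
    (hBcomp.inter_right hDclosed).finite (isDiscrete_iff_discreteTopology.mpr (DiscreteTopology.of_subset hDdisc Set.inter_subset_right))
  refine Set.Finite.of_finite_image (f := fun g : SL2R => ((g : Matrix (Fin 2) (Fin 2) ℝ) : M2))
    (hFin.subset ?_) (fun g _ h _ hgh => Subtype.coe_injective hgh)
  rintro _ ⟨g, ⟨hgG, w, ⟨⟨k, hkK, hgk⟩, hwK⟩⟩, rfl⟩
  have hdist : dist (g • UpperHalfPlane.I) UpperHalfPlane.I ≤ ρ := by
    have h1 : dist UpperHalfPlane.I k ≤ max r 0 := by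
      rw [dist_comm]
      exact (Metric.mem_closedBall.1 (hr hkK)).trans (le_max_left _ _)
    have hw2 : g • k ∈ K := by
      rw [show (g • k : ℍ) = w from hgk]; exact hwK
    have h2 : dist (g • k) UpperHalfPlane.I ≤ max r 0 :=
      (Metric.mem_closedBall.1 (hr hw2)).trans (le_max_left _ _)
    calc dist (g • UpperHalfPlane.I) UpperHalfPlane.I
        ≤ dist (g • UpperHalfPlane.I) (g • k) + dist (g • k) UpperHalfPlane.I :=
          dist_triangle _ _ _
      _ = dist UpperHalfPlane.I k + dist (g • k) UpperHalfPlane.I := by rw [dist_smul]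
      _ ≤ max r 0 + max r 0 := add_le_add h1 h2
      _ = ρ := by rw [hρdef]; ring
  constructor
  · intro i _
    intro j _
    simp only [Set.mem_Icc, ← abs_le]
    exact SL2R_entry_bound g ρ hρ hdist i j
  · exact ⟨g, hgG, rfl⟩
end
end
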